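/- Let X be a Banach space, Ω ⊆ X, f_i : X → ℝ for i = 1,…,p, and uncertainty sets U_i ⊆ X* that are open in the weak* topology. If x̄ ∈ Ω is a highly robust weakly efficient solution (i.e., for every u ∈ U = ∏ U_i there is no x ∈ Ω with f_i(x) − ⟨u_i, x⟩ < f_i(x̄) − ⟨u_i, x̄⟩ for all i), then x̄ is a highly robust strictly efficient solution (i.e., for every u ∈ U there is no x ∈ Ω, x ≠ x̄, with f_i(x) − ⟨u_i, x⟩ ≤ f_i(x̄) − ⟨u_i, x̄⟩ for all i). -/

import Mathlib

/-- If the uncertainty sets `U i ⊆ X*` are weak*-open, then any highly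
robust weakly efficient solution is a highly robust strictly efficient solution. -/
theorem highly_robust_weak_iff_strict_of_open
    {X : Type*} [NormedAddCommGroup X] [NormedSpace ℝ X] [CompleteSpace X]
    {p : ℕ} (Ω : Set X) (f : Fin p → X → ℝ) (U : Fin p → Set (WeakDual ℝ X))
    (hUopen : ∀ i, IsOpen (U i)) (xb : X) (hxb : xb ∈ Ω)
    (hweak : ∀ u : Fin p → WeakDual ℝ X, (∀ i, u i ∈ U i) →
      ¬ ∃ x ∈ Ω, ∀ i, f i x - u i x < f i xb - u i xb) :
    ∀ u : Fin p → WeakDual ℝ X, (∀ i, u i ∈ U i) →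
      ¬ ∃ x ∈ Ω, x ≠ xb ∧ ∀ i, f i x - u i x ≤ f i xb - u i xb := by
  intro u hu ⟨x, hxΩ, hxne, hle⟩
  -- Hahn–Banach: get g with g (x - xb) = ‖x - xb‖ > 0
  obtain ⟨g, hg1, hg2⟩ := exists_dual_vector ℝ (x - xb) (norm_ne_zero_iff.mpr (sub_ne_zero.mpr hxne))
  have hgpos : g xb < g x := by
    have h : g x - g xb = ‖x - xb‖ := by rw [← map_sub]; exact hg2
    have : (0 : ℝ) < ‖x - xb‖ := norm_pos_iff.mpr (sub_ne_zero.mpr hxne)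
    linarith
  set gw : WeakDual ℝ X := g with hgw
  -- the perturbation map is continuous into the weak* topology
  have hφ : ∀ i : Fin p, Continuous fun t : ℝ => u i + t • gw := by
    intro i
    apply WeakDual.continuous_of_continuous_eval
    intro y
    have : (fun t : ℝ => (u i + t • gw) y) = fun t : ℝ => u i y + t * gw y := rfl
    rw [this]
    continuity
  -- the set of good perturbation sizes is open and contains 0
  have hS : IsOpen (⋂ i : Fin p, (fun t : ℝ => u i + t • gw) ⁻¹' U i) :=
    isOpen_iInter_of_finite fun i => (hUopen i).preimage (hφ i)
  have h0 : (0 : ℝ) ∈ ⋂ i : Fin p, (fun t : ℝ => u i + t • gw) ⁻¹' U i := by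
    simp only [Set.mem_iInter, Set.mem_preimage, zero_smul, add_zero]
    exact hu
  obtain ⟨ε, hε, hball⟩ := Metric.isOpen_iff.mp hS 0 h0
  have hhalf : ε / 2 ∈ ⋂ i : Fin p, (fun t : ℝ => u i + t • gw) ⁻¹' U i := by
    apply hball
    rw [Metric.mem_ball, Real.dist_eq, sub_zero, abs_of_pos (by linarith : (0:ℝ) < ε / 2)]
    linarith
  refine hweak (fun i => u i + (ε / 2) • gw) (fun i => ?_) ⟨x, hxΩ, fun i => ?_⟩
  · exact Set.mem_iInter.mp hhalf i
  · have h1 : (u i + (ε / 2) • gw) x = u i x + (ε / 2) * g x := rfl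
    have h2 : (u i + (ε / 2) • gw) xb = u i xb + (ε / 2) * g xb := rfl
    rw [h1, h2]
    have := hle i
    nlinarith
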